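/- Let γ be the normal prior density component γ(μ;b,c) = (b/√(2π))exp(−b²(μ−c)²/2), and consider the spike-and-slab prior (1−w)δ₀ + wγ(·;b,c) with X|μ ∼ N(μ,1). Then the posterior median δ(x;w,b,c) satisfies δ(x;w,b,c) − (x/b² + c)/(1/b² + 1) → 0 as |x| → ∞. -/

import Mathlib

open MeasureTheory Real Set Pointwise

/-- Standard normal density. -/
noncomputable def stdN (x : ℝ) : ℝ := (Real.sqrt (2 * Real.pi))⁻¹ * Real.exp (-x ^ 2 / 2)

/-- Convolution `g(x;c) = ∫ φ(x−μ) γ₀(μ−c) dμ`. -/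
noncomputable def conv (γ₀ : ℝ → ℝ) (c x : ℝ) : ℝ := ∫ μ : ℝ, stdN (x - μ) * γ₀ (μ - c)

/-- Marginal density `m(x;w,c) = (1−w)φ(x) + w g(x;c)`. -/
noncomputable def marg (γ₀ : ℝ → ℝ) (w c x : ℝ) : ℝ := (1 - w) * stdN x + w * conv γ₀ c x

/-- Posterior CDF of `μ` given `X = x` under the prior `(1−w)δ₀ + w γ₀(·−c)`
and likelihood `X | μ ∼ N(μ,1)`. -/
noncomputable def postCDF (γ₀ : ℝ → ℝ) (w c x t : ℝ) : ℝ :=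
  ((1 - w) * stdN x * (if (0:ℝ) ≤ t then 1 else 0)
    + w * ∫ μ in Set.Iic t, stdN (x - μ) * γ₀ (μ - c)) / marg γ₀ w c x

/-- Posterior median. -/
noncomputable def postMedian (γ₀ : ℝ → ℝ) (w c x : ℝ) : ℝ :=
  sInf {t : ℝ | 1 / 2 ≤ postCDF γ₀ w c x t}

/-- Standard normal slab density with precision parameter `b` (centered at 0):
`γ₀(μ) = (b/√(2π)) exp(−b²μ²/2)`; the shifted slab is `γ(μ;b,c) = γ₀(μ−c)`. -/
noncomputable def normSlab (b μ : ℝ) : ℝ :=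
  b / Real.sqrt (2 * Real.pi) * Real.exp (-(b ^ 2) * μ ^ 2 / 2)

section AuxSOS

noncomputable def Phi (t : ℝ) : ℝ := ∫ u in Set.Iic t, stdN u

lemma stdN_eq : stdN = fun x => (Real.sqrt (2 * Real.pi))⁻¹ * Real.exp (-(1/2 : ℝ) * x ^ 2) := by
  funext x; simp only [stdN]; ring_nf

lemma stdN_pos (x : ℝ) : 0 < stdN x := by
  have h : (0:ℝ) < Real.sqrt (2 * Real.pi) := Real.sqrt_pos.2 (by positivity)
  exact mul_pos (inv_pos.2 h) (Real.exp_pos _)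

lemma stdN_integrable : Integrable stdN := by
  rw [stdN_eq]
  exact (integrable_exp_neg_mul_sq (by norm_num : (0:ℝ) < 1/2)).const_mul _

lemma stdN_continuous : Continuous stdN := by
  rw [stdN_eq]; fun_prop

lemma stdN_integral : ∫ x, stdN x = 1 := by
  rw [stdN_eq]
  rw [MeasureTheory.integral_const_mul]
  have := integral_gaussian (1/2 : ℝ)
  simp only [neg_mul] at this ⊢
  rw [this]
  rw [show (π / (1/2) : ℝ) = 2 * π by ring, inv_mul_cancel₀]
  positivity

lemma setIntegral_Iic_comp_sub (f : ℝ → ℝ) (m t : ℝ) :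
    ∫ μ in Set.Iic t, f (μ - m) = ∫ μ in Set.Iic (t - m), f μ := by
  rw [← integral_indicator measurableSet_Iic, ← integral_indicator measurableSet_Iic]
  have h : (Set.Iic t).indicator (fun μ => f (μ - m)) =
      fun μ => (Set.Iic (t - m)).indicator f (μ - m) := by
    funext μ
    simp only [Set.indicator_apply, Set.mem_Iic, sub_le_sub_iff_right]
  rw [h, integral_sub_right_eq_self ((Set.Iic (t - m)).indicator f) m]

lemma int_Iic_scaled {a : ℝ} (ha : 0 < a) (m t : ℝ) :
    ∫ μ in Set.Iic t, a * stdN (a * (μ - m)) = Phi (a * (t - m)) := by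
  rw [MeasureTheory.integral_const_mul, setIntegral_Iic_comp_sub (fun u => stdN (a * u)) m t]
  have h1 : ∫ μ in Set.Iic (t - m), stdN (a * μ)
      = (a ^ Module.finrank ℝ ℝ)⁻¹ • ∫ u in a • Set.Iic (t - m), stdN u := by
    simpa [smul_eq_mul] using
      MeasureTheory.Measure.setIntegral_comp_smul_of_pos volume stdN (Set.Iic (t - m)) ha
  rw [h1, LinearOrderedField.smul_Iic ha]
  simp only [Module.finrank_self, pow_one, smul_eq_mul]
  rw [Phi]
  field_simp

lemma int_all_scaled {a : ℝ} (ha : 0 < a) (m : ℝ) :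
    ∫ μ : ℝ, a * stdN (a * (μ - m)) = 1 := by
  rw [MeasureTheory.integral_const_mul, integral_sub_right_eq_self (fun u => stdN (a * u)) m]
  rw [MeasureTheory.Measure.integral_comp_mul_left stdN a, stdN_integral]
  rw [abs_of_pos (inv_pos.2 ha)]
  simp only [smul_eq_mul]
  field_simp

lemma stdN_scaled_integrable {a : ℝ} (ha : 0 < a) (m : ℝ) :
    Integrable (fun μ => a * stdN (a * (μ - m))) := by
  refine Integrable.const_mul ?_ a
  have h1 : Integrable (fun u : ℝ => stdN (a * u)) :=
    stdN_integrable.comp_mul_left' ha.ne'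
  exact h1.comp_sub_right m

lemma Phi_mono : Monotone Phi := by
  intro s t hst
  exact setIntegral_mono_set stdN_integrable.integrableOn
    (Filter.Eventually.of_forall (fun x => (stdN_pos x).le))
    (HasSubset.Subset.eventuallyLE (Set.Iic_subset_Iic.2 hst))

lemma Phi_add_Ioi (t : ℝ) : Phi t + ∫ x in Set.Ioi t, stdN x = 1 := by
  rw [Phi, intervalIntegral.integral_Iic_add_Ioi stdN_integrable.integrableOn stdN_integrable.integrableOn,
    stdN_integral]

lemma Phi_neg (a : ℝ) : Phi (-a) = 1 - Phi a := by
  have h1 : Phi (-a) = ∫ x in Set.Iic (-a), stdN (-x) := by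
    rw [Phi]; congr 1; funext x; simp [stdN]
  rw [h1, integral_comp_neg_Iic (-a) stdN, neg_neg]
  have := Phi_add_Ioi a
  linarith

lemma Phi_zero : Phi 0 = 1 / 2 := by
  have := Phi_neg 0
  rw [neg_zero] at this
  linarith

lemma Phi_gt_half {a : ℝ} (ha : 0 < a) : 1 / 2 < Phi a := by
  have h1 : Phi a - Phi 0 = ∫ x in (0:ℝ)..a, stdN x :=
    intervalIntegral.integral_Iic_sub_Iic stdN_integrable.integrableOn
      stdN_integrable.integrableOn
  have h2 : 0 < ∫ x in (0:ℝ)..a, stdN x :=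
    intervalIntegral.intervalIntegral_pos_of_pos
      stdN_integrable.intervalIntegrable (fun x => stdN_pos x) ha
  rw [Phi_zero] at h1
  linarith

section Main

variable (b c : ℝ)

noncomputable def mstar (x : ℝ) : ℝ := (x + b ^ 2 * c) / (1 + b ^ 2)

noncomputable def gx (x : ℝ) : ℝ :=
  b / Real.sqrt (1 + b ^ 2) * stdN ((x - c) * (b / Real.sqrt (1 + b ^ 2)))

variable {b}

lemma sβ_sq (hb : 0 < b) : Real.sqrt (1 + b ^ 2) ^ 2 = 1 + b ^ 2 :=
  Real.sq_sqrt (by positivity)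

lemma sβ_pos (hb : 0 < b) : 0 < Real.sqrt (1 + b ^ 2) := Real.sqrt_pos.2 (by positivity)

lemma gx_pos (hb : 0 < b) (x : ℝ) : 0 < gx b c x :=
  mul_pos (div_pos hb (sβ_pos hb)) (stdN_pos _)

lemma key_id (hb : 0 < b) (x μ : ℝ) :
    stdN (x - μ) * normSlab b (μ - c) =
      gx b c x *
        (Real.sqrt (1 + b ^ 2) * stdN (Real.sqrt (1 + b ^ 2) * (μ - mstar b c x))) := by
  set s := Real.sqrt (1 + b ^ 2) with hs_def
  have hs2 : s ^ 2 = 1 + b ^ 2 := sβ_sq hb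
  have hs0 : 0 < s := sβ_pos hb
  have hexp : Real.exp (-(x - μ) ^ 2 / 2) * Real.exp (-(b ^ 2) * (μ - c) ^ 2 / 2) =
      Real.exp (-((x - c) * (b / s)) ^ 2 / 2) *
        Real.exp (-(s * (μ - mstar b c x)) ^ 2 / 2) := by
    rw [← Real.exp_add, ← Real.exp_add]
    congr 1
    rw [mstar]
    have hβ : (1 : ℝ) + b ^ 2 ≠ 0 := by positivity
    have h1 : ((x - c) * (b / s)) ^ 2 = (x - c) ^ 2 * b ^ 2 / (1 + b ^ 2) := by
      rw [mul_pow, div_pow, hs2]; ring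
    have h2 : (s * (μ - (x + b ^ 2 * c) / (1 + b ^ 2))) ^ 2 =
        (1 + b ^ 2) * (μ - (x + b ^ 2 * c) / (1 + b ^ 2)) ^ 2 := by
      rw [mul_pow, hs2]
    rw [h1, h2]
    field_simp
    ring
  simp only [stdN, normSlab, gx, ← hs_def]
  have hconst : (Real.sqrt (2 * π))⁻¹ * (b / Real.sqrt (2 * π)) =
      b / s * (Real.sqrt (2 * π))⁻¹ * (s * (Real.sqrt (2 * π))⁻¹) := by
    field_simp
  calc (Real.sqrt (2 * π))⁻¹ * Real.exp (-(x - μ) ^ 2 / 2) *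
        (b / Real.sqrt (2 * π) * Real.exp (-(b ^ 2) * (μ - c) ^ 2 / 2))
      = ((Real.sqrt (2 * π))⁻¹ * (b / Real.sqrt (2 * π))) *
        (Real.exp (-(x - μ) ^ 2 / 2) * Real.exp (-(b ^ 2) * (μ - c) ^ 2 / 2)) := by ring
    _ = (b / s * (Real.sqrt (2 * π))⁻¹ * (s * (Real.sqrt (2 * π))⁻¹)) *
        (Real.exp (-((x - c) * (b / s)) ^ 2 / 2) *
          Real.exp (-(s * (μ - mstar b c x)) ^ 2 / 2)) := by rw [hconst, hexp]
    _ = _ := by ring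

end Main

section Main2

variable {b : ℝ} (c : ℝ)

lemma conv_eq (hb : 0 < b) (x : ℝ) : conv (normSlab b) c x = gx b c x := by
  rw [conv]
  have h : ∀ μ : ℝ, stdN (x - μ) * normSlab b (μ - c) =
      gx b c x * (Real.sqrt (1 + b ^ 2) * stdN (Real.sqrt (1 + b ^ 2) * (μ - mstar b c x))) :=
    key_id c hb x
  simp_rw [h]
  rw [MeasureTheory.integral_const_mul, int_all_scaled (sβ_pos hb), mul_one]

lemma intIic_eq (hb : 0 < b) (x t : ℝ) :
    ∫ μ in Set.Iic t, stdN (x - μ) * normSlab b (μ - c) =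
      gx b c x * Phi (Real.sqrt (1 + b ^ 2) * (t - mstar b c x)) := by
  have h : ∀ μ : ℝ, stdN (x - μ) * normSlab b (μ - c) =
      gx b c x * (Real.sqrt (1 + b ^ 2) * stdN (Real.sqrt (1 + b ^ 2) * (μ - mstar b c x))) :=
    key_id c hb x
  simp_rw [h]
  rw [MeasureTheory.integral_const_mul, int_Iic_scaled (sβ_pos hb)]

lemma postCDF_eq (hb : 0 < b) (w x t : ℝ) :
    postCDF (normSlab b) w c x t =
      ((1 - w) * stdN x * (if (0:ℝ) ≤ t then 1 else 0)
        + w * gx b c x * Phi (Real.sqrt (1 + b ^ 2) * (t - mstar b c x)))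
        / ((1 - w) * stdN x + w * gx b c x) := by
  rw [postCDF, marg, conv_eq c hb, intIic_eq c hb]
  congr 1
  ring

lemma median_close (hb : 0 < b) {w : ℝ} (hw : 0 < w) (hw1 : w ≤ 1) {x ε : ℝ} (hε : 0 < ε)
    (hr : (1 - w) * stdN x < w * gx b c x * (2 * Phi (Real.sqrt (1 + b ^ 2) * ε) - 1)) :
    |postMedian (normSlab b) w c x - mstar b c x| ≤ ε := by
  set s := Real.sqrt (1 + b ^ 2) with hs_def
  set m := mstar b c x with hm_def
  set r := (1 - w) * stdN x with hr_def
  set G := w * gx b c x with hG_def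
  set δ := 2 * Phi (s * ε) - 1 with hδ_def
  have hs0 : 0 < s := sβ_pos hb
  have hr0 : 0 ≤ r := mul_nonneg (by linarith) (stdN_pos x).le
  have hG0 : 0 < G := mul_pos hw (gx_pos c hb x)
  have hD : 0 < r + G := by linarith
  have hδ0 : 0 < δ := by
    have := Phi_gt_half (mul_pos hs0 hε)
    simp only [hδ_def]; linarith
  have hF : ∀ t, postCDF (normSlab b) w c x t =
      (r * (if (0:ℝ) ≤ t then 1 else 0) + G * Phi (s * (t - m))) / (r + G) := fun t =>
    postCDF_eq c hb w x t
  have hind : ∀ t, (0:ℝ) ≤ (if (0:ℝ) ≤ t then (1:ℝ) else 0) ∧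
      (if (0:ℝ) ≤ t then (1:ℝ) else 0) ≤ 1 := by
    intro t; split <;> norm_num
  have hmono : ∀ t₁ t₂, t₁ ≤ t₂ →
      postCDF (normSlab b) w c x t₁ ≤ postCDF (normSlab b) w c x t₂ := by
    intro t₁ t₂ h12
    rw [hF, hF]
    have h1 : (if (0:ℝ) ≤ t₁ then (1:ℝ) else 0) ≤ (if (0:ℝ) ≤ t₂ then (1:ℝ) else 0) := by
      split_ifs with ha hb'
      · exact le_refl _
      · exact absurd (ha.trans h12) hb'
      · norm_num
      · exact le_refl _
    have h2 : Phi (s * (t₁ - m)) ≤ Phi (s * (t₂ - m)) :=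
      Phi_mono (mul_le_mul_of_nonneg_left (by linarith) hs0.le)
    have hnum : r * (if (0:ℝ) ≤ t₁ then (1:ℝ) else 0) + G * Phi (s * (t₁ - m)) ≤
        r * (if (0:ℝ) ≤ t₂ then (1:ℝ) else 0) + G * Phi (s * (t₂ - m)) :=
      add_le_add (mul_le_mul_of_nonneg_left h1 hr0) (mul_le_mul_of_nonneg_left h2 hG0.le)
    gcongr
  have hPhi_eps : Phi (s * ε) = (1 + δ) / 2 := by rw [hδ_def]; ring
  have hupper : 1 / 2 ≤ postCDF (normSlab b) w c x (m + ε) := by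
    rw [hF]
    rw [le_div_iff₀ hD]
    have harg : s * (m + ε - m) = s * ε := by ring
    rw [harg, hPhi_eps]
    have := (hind (m + ε)).1
    nlinarith
  have hlower : postCDF (normSlab b) w c x (m - ε) < 1 / 2 := by
    rw [hF]
    rw [div_lt_iff₀ hD]
    have harg : s * (m - ε - m) = -(s * ε) := by ring
    rw [harg, Phi_neg, hPhi_eps]
    have := (hind (m - ε)).2
    nlinarith
  set S := {t : ℝ | 1 / 2 ≤ postCDF (normSlab b) w c x t} with hS_def
  have hmem : m + ε ∈ S := hupper
  have hlb : ∀ t ∈ S, m - ε < t := by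
    intro t ht
    by_contra h
    push_neg at h
    have := (hmono t (m - ε) h).trans_lt hlower
    exact absurd ht (by simp only [hS_def, Set.mem_setOf_eq]; push_neg; exact this)
  have hbdd : BddBelow S := ⟨m - ε, fun t ht => (hlb t ht).le⟩
  have h1 : postMedian (normSlab b) w c x ≤ m + ε := csInf_le hbdd hmem
  have h2 : m - ε ≤ postMedian (normSlab b) w c x :=
    le_csInf ⟨m + ε, hmem⟩ (fun t ht => (hlb t ht).le)
  rw [abs_le]
  constructor <;> linarith

end Main2

section Main3

variable {b : ℝ} (c : ℝ)

lemma mstar_eq (hb : 0 < b) (x : ℝ) :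
    (x / b ^ 2 + c) / (1 / b ^ 2 + 1) = mstar b c x := by
  rw [mstar]
  have hb2 : (b:ℝ) ^ 2 ≠ 0 := by positivity
  field_simp

lemma ratio_eq (hb : 0 < b) (x : ℝ) :
    stdN x / gx b c x = (Real.sqrt (1 + b ^ 2) / b) *
      Real.exp (b ^ 2 * c ^ 2 / 2 - (x + b ^ 2 * c) ^ 2 / (2 * (1 + b ^ 2))) := by
  set s := Real.sqrt (1 + b ^ 2) with hs_def
  have hs2 : s ^ 2 = 1 + b ^ 2 := sβ_sq hb
  have hs0 : 0 < s := sβ_pos hb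
  have hβ : (0:ℝ) < 1 + b ^ 2 := by positivity
  rw [div_eq_iff (gx_pos c hb x).ne']
  rw [gx, stdN, stdN, ← hs_def]
  rw [show ∀ A B C D E : ℝ, A * Real.exp E * (B * (C * Real.exp D)) =
    (A * B * C) * (Real.exp E * Real.exp D) from by intros; ring]
  rw [← Real.exp_add]
  have hc : (s / b) * (b / s) * (Real.sqrt (2 * π))⁻¹ = (Real.sqrt (2 * π))⁻¹ := by
    field_simp
  rw [hc]
  congr 1
  have h1 : ((x - c) * (b / s)) ^ 2 = (x - c) ^ 2 * b ^ 2 / (1 + b ^ 2) := by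
    rw [mul_pow, div_pow, hs2]; ring
  rw [h1]
  congr 1
  field_simp
  ring

lemma tendsto_ratio (hb : 0 < b) :
    Filter.Tendsto (fun x => stdN x / gx b c x) (Filter.cocompact ℝ) (nhds 0) := by
  have hβ : (0:ℝ) < 2 * (1 + b ^ 2) := by positivity
  have hq : Filter.Tendsto (fun x : ℝ => b ^ 2 * c ^ 2 / 2 - (x + b ^ 2 * c) ^ 2 / (2 * (1 + b ^ 2)))
      (Filter.cocompact ℝ) Filter.atBot := by
    have hsq : Filter.Tendsto (fun x : ℝ => (x + b ^ 2 * c) ^ 2) (Filter.cocompact ℝ)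
        Filter.atTop := by
      rw [cocompact_eq_atBot_atTop, Filter.tendsto_sup]
      constructor
      · have h2 : Filter.Tendsto (fun x : ℝ => -(x + b ^ 2 * c)) Filter.atBot Filter.atTop := by
          apply Filter.tendsto_neg_atBot_atTop.comp
          exact Filter.tendsto_atBot_add_const_right _ _ Filter.tendsto_id
        have := (Filter.tendsto_pow_atTop (two_ne_zero)).comp h2
        refine this.congr (fun x => by simp [Function.comp]; ring)
      · have h2 : Filter.Tendsto (fun x : ℝ => x + b ^ 2 * c) Filter.atTop Filter.atTop :=
          Filter.tendsto_atTop_add_const_right _ _ Filter.tendsto_id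
        exact (Filter.tendsto_pow_atTop (two_ne_zero)).comp h2
    have hdiv := hsq.atTop_div_const hβ
    have := Filter.tendsto_neg_atTop_atBot.comp hdiv
    have h3 := Filter.tendsto_atBot_add_const_left _ (b ^ 2 * c ^ 2 / 2) this
    refine h3.congr (fun x => by simp [Function.comp]; ring)
  have hexp : Filter.Tendsto (fun x : ℝ => Real.exp (b ^ 2 * c ^ 2 / 2 -
      (x + b ^ 2 * c) ^ 2 / (2 * (1 + b ^ 2)))) (Filter.cocompact ℝ) (nhds 0) :=
    Real.tendsto_exp_atBot.comp hq
  have := hexp.const_mul (Real.sqrt (1 + b ^ 2) / b)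
  rw [mul_zero] at this
  refine this.congr (fun x => (ratio_eq c hb x).symm)

end Main3

end AuxSOS

/-- With the normal slab `γ(μ;b,c)` and spike-and-slab prior `(1−w)δ₀ + wγ(·;b,c)`,
the posterior median satisfies `δ(x;w,b,c) − (x/b² + c)/(1/b² + 1) → 0` as `|x| → ∞`. -/
theorem stmt5 (w b c : ℝ) (hb : 0 < b) (hw : 0 < w) (hw1 : w ≤ 1) :
    Filter.Tendsto
      (fun x : ℝ => postMedian (normSlab b) w c x - (x / b ^ 2 + c) / (1 / b ^ 2 + 1))
      (Filter.cocompact ℝ) (nhds 0) := by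
  rw [Metric.tendsto_nhds]
  intro ε hε
  set s := Real.sqrt (1 + b ^ 2) with hs_def
  have hs0 : 0 < s := sβ_pos hb
  set δ := 2 * Phi (s * (ε / 2)) - 1 with hδ_def
  have hδ0 : 0 < δ := by
    have := Phi_gt_half (mul_pos hs0 (half_pos hε))
    simp only [hδ_def]; linarith
  have hrat := tendsto_ratio c hb
  have hev : ∀ᶠ x in Filter.cocompact ℝ, stdN x / gx b c x < w * δ :=
    hrat.eventually (gt_mem_nhds (mul_pos hw hδ0))
  filter_upwards [hev] with x hx
  have hgx : 0 < gx b c x := gx_pos c hb x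
  have hcond : (1 - w) * stdN x < w * gx b c x * δ := by
    have h1 : stdN x < w * δ * gx b c x := (div_lt_iff₀ hgx).1 hx
    nlinarith [stdN_pos x]
  have hclose := median_close c hb hw hw1 (half_pos hε) hcond
  rw [Real.dist_0_eq_abs, mstar_eq c hb x]
  calc |postMedian (normSlab b) w c x - mstar b c x| ≤ ε / 2 := hclose
    _ < ε := by linarith
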